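/- Let X_train ∈ ℝ^{d×n} satisfy K_train := X_train^⊤ X_train = I_n (train-whitened data with n ≤ d), and let X_test ∈ ℝ^{d×m}. Let the first-layer weights evolve by W^{t+1} = W^t − η G^t X_train^⊤ for arbitrary matrices G^t ∈ ℝ^{k×n}. Then for all t ≥ 0 the test activations are obtained from the training activations by interpolation through the mixed second moment matrix: W^t X_test − W^0 X_test = (W^t X_train − W^0 X_train) K_{train×test}, where K_{train×test} = X_train^⊤ X_test. -/

import Mathlib

open Matrix

/-- For train-whitened data (`K_train = X_trainᵀ X_train = I_n`,
possible when `n ≤ d`), under the gradient-descent first-layer update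
`W^{t+1} = W^t − η G^t X_trainᵀ`, the change in the test activations is obtained from
the change in the training activations by interpolation through the mixed second moment
matrix: `W^t X_test − W^0 X_test = (W^t X_train − W^0 X_train) K_{train×test}` with
`K_{train×test} = X_trainᵀ X_test`. -/
theorem test_activations_interpolate_training_activations
    (d n m k : ℕ) (η : ℝ)
    (Xtr : Matrix (Fin d) (Fin n) ℝ)
    (Xte : Matrix (Fin d) (Fin m) ℝ)
    (hwhite : Xtrᵀ * Xtr = 1)
    (W : ℕ → Matrix (Fin k) (Fin d) ℝ)
    (G : ℕ → Matrix (Fin k) (Fin n) ℝ)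
    (hW : ∀ t, W (t + 1) = W t - η • (G t * Xtrᵀ)) :
    ∀ t, W t * Xte - W 0 * Xte = (W t * Xtr - W 0 * Xtr) * (Xtrᵀ * Xte) := by
  have key : ∀ t, ∃ A : Matrix (Fin k) (Fin n) ℝ, W t - W 0 = A * Xtrᵀ := by
    intro t
    induction t with
    | zero => exact ⟨0, by simp⟩
    | succ t ih =>
      obtain ⟨A, hA⟩ := ih
      refine ⟨A - η • G t, ?_⟩
      rw [hW t, Matrix.sub_mul, Matrix.smul_mul, ← hA]
      ring_nf
      abel
  intro t
  obtain ⟨A, hA⟩ := key t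
  have h1 : W t * Xte - W 0 * Xte = (W t - W 0) * Xte := (Matrix.sub_mul _ _ _).symm
  have h2 : W t * Xtr - W 0 * Xtr = (W t - W 0) * Xtr := (Matrix.sub_mul _ _ _).symm
  rw [h1, h2, hA, Matrix.mul_assoc A Xtrᵀ Xtr, hwhite, Matrix.mul_one, Matrix.mul_assoc]
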